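/- Let f: ℝⁿ → ℝ be differentiable, convex, ℓ-strongly convex with ℓ > 0, and with L-Lipschitz gradient, and let x* be its global minimizer. Let x ∈ ℝⁿ, let q ∈ ℝⁿ satisfy ⟨∇f(x), q⟩ ≥ ‖∇f(x)‖₂² and ‖q‖₂² ≤ √n · ‖∇f(x)‖₂², and let x' = x − η·q where 0 < η ≤ 1/(L√n). Then f(x') − f(x*) ≤ (1 − η·ℓ/2 + 2η²·L²·√n) · (f(x) − f(x*)). -/

import Mathlib

open scoped RealInnerProductSpace

private lemma descent_lemma {n : ℕ} {f : EuclideanSpace ℝ (Fin n) → ℝ}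
    (hf : Differentiable ℝ f) {L : NNReal} (hL : LipschitzWith L (gradient f))
    (a b : EuclideanSpace ℝ (Fin n)) :
    f b ≤ f a + ⟪gradient f a, b - a⟫ + (L : ℝ) / 2 * ‖b - a‖ ^ 2 := by
  set v := b - a with hv
  set g : ℝ → ℝ := fun t =>
    f (a + t • v) - t * ⟪gradient f a, v⟫ - (L : ℝ) / 2 * t ^ 2 * ‖v‖ ^ 2 with hg
  have hder : ∀ t : ℝ, HasDerivAt g
      (⟪gradient f (a + t • v), v⟫ - ⟪gradient f a, v⟫ - (L : ℝ) * t * ‖v‖ ^ 2) t := by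
    intro t
    have hline : HasDerivAt (fun s : ℝ => a + s • v) v t := by
      simpa using ((hasDerivAt_id t).smul_const v).const_add a
    have hfd : HasFDerivAt f (InnerProductSpace.toDual ℝ _ (gradient f (a + t • v)))
        (a + t • v) := ((hf (a + t • v)).hasGradientAt).hasFDerivAt
    have hcomp : HasDerivAt (fun s : ℝ => f (a + s • v))
        ⟪gradient f (a + t • v), v⟫ t := by
      simpa [InnerProductSpace.toDual_apply_apply, Function.comp_def] using hfd.comp_hasDerivAt t hline
    have h2 : HasDerivAt (fun s : ℝ => s * ⟪gradient f a, v⟫) ⟪gradient f a, v⟫ t :=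
      hasDerivAt_mul_const _
    have h3 : HasDerivAt (fun s : ℝ => (L : ℝ) / 2 * s ^ 2 * ‖v‖ ^ 2)
        ((L : ℝ) * t * ‖v‖ ^ 2) t := by
      have := ((hasDerivAt_pow 2 t).const_mul ((L : ℝ) / 2)).mul_const (‖v‖ ^ 2)
      exact this.congr_deriv (by rw [show (2:ℕ) - 1 = 1 from rfl, pow_one]; ring)
    exact (hcomp.sub h2).sub h3
  have hanti : AntitoneOn g (Set.Icc (0 : ℝ) 1) := by
    apply antitoneOn_of_deriv_nonpos (convex_Icc 0 1)
    · exact fun t _ => (hder t).continuousAt.continuousWithinAt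
    · exact fun t _ => (hder t).differentiableAt.differentiableWithinAt
    · intro t ht
      rw [interior_Icc] at ht
      rw [(hder t).deriv]
      have h1 : ⟪gradient f (a + t • v), v⟫ - ⟪gradient f a, v⟫
          = ⟪gradient f (a + t • v) - gradient f a, v⟫ := by
        rw [inner_sub_left]
      rw [h1]
      have h2 : ⟪gradient f (a + t • v) - gradient f a, v⟫
          ≤ ‖gradient f (a + t • v) - gradient f a‖ * ‖v‖ := real_inner_le_norm _ _
      have h3 : ‖gradient f (a + t • v) - gradient f a‖ ≤ (L : ℝ) * (t * ‖v‖) := by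
        have := hL.dist_le_mul (a + t • v) a
        rw [dist_eq_norm, dist_eq_norm] at this
        simpa [norm_smul, abs_of_pos ht.1] using this
      have hv0 : (0 : ℝ) ≤ ‖v‖ := norm_nonneg _
      nlinarith [norm_nonneg (gradient f (a + t • v) - gradient f a)]
  have h01 : g 1 ≤ g 0 := hanti (by norm_num) (by norm_num) zero_le_one
  have hab : a + v = b := by rw [hv]; abel
  simp only [hg, one_smul, zero_smul, add_zero, one_pow, zero_pow, mul_zero, zero_mul,
    mul_one, sub_zero, hab] at h01
  linarith

/-- **One-step descent bound for quantized gradient descent.**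
If `f` is convex, `ℓ`-strongly convex, with `L`-Lipschitz gradient and minimizer `x*`,
`q` satisfies `⟨∇f(x), q⟩ ≥ ‖∇f(x)‖₂²` and `‖q‖₂² ≤ √n ‖∇f(x)‖₂²`, and
`x' = x − η q` with `0 < η ≤ 1/(L√n)`, then
`f(x') − f(x*) ≤ (1 − ηℓ/2 + 2η²L²√n)(f(x) − f(x*))`. -/
theorem quantized_gd_step (n : ℕ)
    (f : EuclideanSpace ℝ (Fin n) → ℝ) (hf : Differentiable ℝ f)
    (hconv : ConvexOn ℝ Set.univ f)
    (ℓ : ℝ) (hℓ : 0 < ℓ)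
    (hsc : ∀ x y : EuclideanSpace ℝ (Fin n),
      f x + ⟪gradient f x, y - x⟫ + ℓ / 2 * ‖y - x‖ ^ 2 ≤ f y)
    (L : NNReal) (hL : LipschitzWith L (gradient f))
    (xstar : EuclideanSpace ℝ (Fin n)) (hmin : ∀ y, f xstar ≤ f y)
    (x q : EuclideanSpace ℝ (Fin n))
    (hq1 : ‖gradient f x‖ ^ 2 ≤ ⟪gradient f x, q⟫)
    (hq2 : ‖q‖ ^ 2 ≤ Real.sqrt n * ‖gradient f x‖ ^ 2)
    (η : ℝ) (hη0 : 0 < η) (hη : η ≤ 1 / (L * Real.sqrt n))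
    (x' : EuclideanSpace ℝ (Fin n)) (hx' : x' = x - η • q) :
    f x' - f xstar ≤
      (1 - η * ℓ / 2 + 2 * η ^ 2 * (L : ℝ) ^ 2 * Real.sqrt n) * (f x - f xstar) := by
  set g := gradient f x with hgdef
  have hsn : (0 : ℝ) ≤ Real.sqrt n := Real.sqrt_nonneg _
  -- L √n > 0
  have hLn : 0 < (L : ℝ) * Real.sqrt n := by
    by_contra h
    push_neg at h
    have h0 : (L : ℝ) * Real.sqrt n = 0 :=
      le_antisymm h (mul_nonneg L.2 hsn)
    rw [h0, div_zero] at hη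
    linarith
  have hL0 : 0 < (L : ℝ) := by nlinarith [hLn, hsn, L.2]
  have hD0 : 0 ≤ f x - f xstar := by linarith [hmin x]
  have hG0 : (0 : ℝ) ≤ ‖g‖ ^ 2 := sq_nonneg _
  -- co-coercivity: ‖g‖² ≤ 2 L (f x - f x*)
  have hcoco : ‖g‖ ^ 2 ≤ 2 * (L : ℝ) * (f x - f xstar) := by
    set y := x - (L : ℝ)⁻¹ • g with hy
    have hdes := descent_lemma hf hL x y
    have hyx : y - x = -((L : ℝ)⁻¹ • g) := by rw [hy]; abel
    have hinner : ⟪g, y - x⟫ = -((L : ℝ)⁻¹ * ‖g‖ ^ 2) := by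
      rw [hyx, inner_neg_right, real_inner_smul_right, real_inner_self_eq_norm_sq]
    have hnorm : ‖y - x‖ ^ 2 = (L : ℝ)⁻¹ ^ 2 * ‖g‖ ^ 2 := by
      rw [hyx, norm_neg, norm_smul]
      rw [Real.norm_eq_abs, abs_of_nonneg (inv_nonneg.mpr hL0.le)]
      ring
    rw [hinner, hnorm] at hdes
    have hmy := hmin y
    have hsimp : (L : ℝ) / 2 * ((L : ℝ)⁻¹ ^ 2 * ‖g‖ ^ 2) = (L : ℝ)⁻¹ / 2 * ‖g‖ ^ 2 := by
      field_simp
    rw [hsimp] at hdes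
    have h1 : (L : ℝ)⁻¹ / 2 * ‖g‖ ^ 2 ≤ f x - f xstar := by linarith
    have h2 := mul_le_mul_of_nonneg_left h1 (by positivity : (0:ℝ) ≤ 2 * (L : ℝ))
    have h3 : 2 * (L : ℝ) * ((L : ℝ)⁻¹ / 2 * ‖g‖ ^ 2) = ‖g‖ ^ 2 := by
      field_simp
    linarith
  -- PL inequality: 2 ℓ (f x - f x*) ≤ ‖g‖²
  have hPL : 2 * ℓ * (f x - f xstar) ≤ ‖g‖ ^ 2 := by
    have hd := hsc x xstar
    have habs : -(‖g‖ * ‖xstar - x‖) ≤ ⟪g, xstar - x⟫ :=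
      neg_le_of_abs_le (abs_real_inner_le_norm _ _)
    nlinarith [sq_nonneg (ℓ * ‖xstar - x‖ - ‖g‖), hℓ, hd, habs]
  -- main descent step
  have hstep : f x' ≤ f x - η * ⟪g, q⟫ + (L : ℝ) / 2 * (η ^ 2 * ‖q‖ ^ 2) := by
    have hdes := descent_lemma hf hL x x'
    have hxx : x' - x = -(η • q) := by rw [hx']; abel
    have hinner : ⟪g, x' - x⟫ = -(η * ⟪g, q⟫) := by
      rw [hxx, inner_neg_right, real_inner_smul_right]
    have hnorm : ‖x' - x‖ ^ 2 = η ^ 2 * ‖q‖ ^ 2 := by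
      rw [hxx, norm_neg, norm_smul, Real.norm_eq_abs]
      rw [mul_pow, sq_abs]
    rw [hinner, hnorm] at hdes
    linarith
  have hη1 : η * ((L : ℝ) * Real.sqrt n) ≤ 1 := by
    rw [← le_div_iff₀ hLn]
    simpa [one_div] using hη
  have hQ : (L : ℝ) / 2 * (η ^ 2 * ‖q‖ ^ 2) ≤ η / 2 * ‖g‖ ^ 2 := by
    have h1 : (L : ℝ) / 2 * (η ^ 2 * ‖q‖ ^ 2)
        ≤ (L : ℝ) / 2 * (η ^ 2 * (Real.sqrt n * ‖g‖ ^ 2)) := by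
      apply mul_le_mul_of_nonneg_left _ (by positivity)
      exact mul_le_mul_of_nonneg_left hq2 (sq_nonneg η)
    nlinarith [mul_nonneg hη0.le hG0, hη1, h1]
  have key : f x' - f xstar ≤ (1 - η * ℓ) * (f x - f xstar) := by
    have h2 : η * ⟪g, q⟫ ≥ η * ‖g‖ ^ 2 := mul_le_mul_of_nonneg_left hq1 hη0.le
    have h3 : η * (2 * ℓ * (f x - f xstar)) ≤ η * ‖g‖ ^ 2 :=
      mul_le_mul_of_nonneg_left hPL hη0.le
    linarith [hstep, hQ, h2, h3]
  have hfac : 0 ≤ (η * ℓ / 2 + 2 * η ^ 2 * (L : ℝ) ^ 2 * Real.sqrt n) * (f x - f xstar) := by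
    apply mul_nonneg _ hD0
    positivity
  linarith [key, hfac]
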